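/- Let C be a κ-accessible category with finite limits such that the Cartesian product preserves κ-filtered colimits separately in each variable. Then for every morphism f : c → d in C, the pullback (base change) functor f* : C/d → C/c preserves κ-filtered colimits. -/

import Mathlib

/-!
STATEMENT 5: Let `C` be κ-accessible with finite limits such that the Cartesian
product preserves κ-filtered colimits in each variable. Then for every `f : c ⟶ d`
the pullback functor `f* : C/d ⥤ C/c` preserves κ-filtered colimits.
-/

open CategoryTheory CategoryTheory.Limits

universe w v u

/-- A category `J` is `κ`-filtered if every diagram indexed by a category with fewer
than `κ` morphisms admits a cocone. -/
def IsCardinalFiltered (κ : Cardinal.{w}) (J : Cat.{w, w}) : Prop :=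
  ∀ A : Cat.{w, w}, Cardinal.mk (Σ (a : A) (b : A), a ⟶ b) < κ →
    ∀ F : A ⥤ J, Nonempty (Cocone F)

/-- An object `X` is `κ`-compact if `Map(X, -)` preserves `κ`-filtered colimits. -/
def IsCardinalCompact (κ : Cardinal.{w}) {C : Type u} [Category.{v} C] (X : C) : Prop :=
  ∀ J : Cat.{w, w}, IsCardinalFiltered κ J →
    Nonempty (PreservesColimitsOfShape J (coyoneda.obj (Opposite.op X)))

/-- A category is `κ`-accessible if it has `κ`-filtered colimits, every object is a
`κ`-filtered colimit of `κ`-compact objects, and the `κ`-compact objects form an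
essentially small subcategory. -/
def IsCardinalAccessible (κ : Cardinal.{w}) (C : Type u) [Category.{v} C] : Prop :=
  (∀ J : Cat.{w, w}, IsCardinalFiltered κ J → HasColimitsOfShape J C) ∧
  (∀ X : C, ∃ (J : Cat.{w, w}) (F : J ⥤ C) (c : Cocone F),
      Nonempty (IsColimit c) ∧ IsCardinalFiltered κ J ∧
      (∀ j : J, IsCardinalCompact κ (F.obj j)) ∧ Nonempty (c.pt ≅ X)) ∧
  (∃ (ι : Type w) (G : ι → C), (∀ i, IsCardinalCompact κ (G i)) ∧
      ∀ X : C, IsCardinalCompact κ X → ∃ i, Nonempty (X ≅ G i))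

instance asSmallFinite {D : Type u} [Category.{v} D] [Finite D] : Finite (AsSmall.{w} D) :=
  Finite.of_equiv D Equiv.ulift.symm

instance asSmallHomFinite {D : Type u} [Category.{v} D] [∀ a b : D, Finite (a ⟶ b)]
    (a b : AsSmall.{w} D) : Finite (a ⟶ b) :=
  Finite.of_equiv (ULift.down a ⟶ ULift.down b) Equiv.ulift.symm

lemma card_lt_helper (κ : Cardinal.{w}) (hκ : κ.IsRegular) (A : Type w) [SmallCategory A]
    [Finite (Σ (a : A) (b : A), a ⟶ b)] :
    Cardinal.mk (Σ (a : Cat.of A) (b : Cat.of A), a ⟶ b) < κ :=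
  (Cardinal.lt_aleph0_of_finite (Σ (a : A) (b : A), a ⟶ b)).trans_le hκ.aleph0_le

lemma isFiltered_of_isCardinalFiltered {κ : Cardinal.{w}} (hκ : κ.IsRegular)
    {J : Cat.{w, w}} (hJ : IsCardinalFiltered κ J) : IsFiltered J := by
  haveI hne : Nonempty J := by
    obtain ⟨cc⟩ := hJ (Cat.of (AsSmall.{w} (Discrete PEmpty.{1})))
      (card_lt_helper κ hκ _) (AsSmall.down ⋙ Functor.empty J)
    exact ⟨cc.pt⟩
  haveI h2 : IsFilteredOrEmpty J := by
    constructor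
    · intro X Y
      obtain ⟨cc⟩ := hJ (Cat.of (AsSmall.{w} (Discrete Bool)))
        (card_lt_helper κ hκ _)
        (AsSmall.down ⋙ Discrete.functor (fun b => if b then X else Y))
      exact ⟨cc.pt, cc.ι.app (AsSmall.up.obj ⟨true⟩), cc.ι.app (AsSmall.up.obj ⟨false⟩), trivial⟩
    · intro X Y u v
      obtain ⟨cc⟩ := hJ (Cat.of (AsSmall.{w} WalkingParallelPair))
        (card_lt_helper κ hκ _)
        (AsSmall.down ⋙ parallelPair u v)
      refine ⟨cc.pt, cc.ι.app (AsSmall.up.obj .one), ?_⟩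
      have h1 := cc.ι.naturality (AsSmall.up.map WalkingParallelPairHom.left)
      have h2 := cc.ι.naturality (AsSmall.up.map WalkingParallelPairHom.right)
      exact h1.trans h2.symm
  exact ⟨⟩

lemma isIso_of_compact_bijective {C : Type u} [Category.{v} C] {κ : Cardinal.{w}}
    (hacc : IsCardinalAccessible κ C) {A B : C} (θ : A ⟶ B)
    (h : ∀ (G : C), IsCardinalCompact κ G →
      Function.Bijective (fun g : G ⟶ A => g ≫ θ)) : IsIso θ := by
  obtain ⟨JB, FB, cB, ⟨hcB⟩, -, hcptB, ⟨eB⟩⟩ := hacc.2.1 B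
  obtain ⟨JA, FA, cA, ⟨hcA⟩, -, hcptA, ⟨eA⟩⟩ := hacc.2.1 A
  have hl0 := fun j => ((h _ (hcptB j)).2 (cB.ι.app j ≫ eB.hom))
  choose l hl using hl0
  simp only [] at hl
  have hl : ∀ j, l j ≫ θ = cB.ι.app j ≫ eB.hom := hl
  have hnat : ∀ {j j'} (φ : j ⟶ j'), FB.map φ ≫ l j' = l j := by
    intro j j' φ
    apply (h _ (hcptB j)).1
    show (FB.map φ ≫ l j') ≫ θ = l j ≫ θ
    rw [Category.assoc, hl, hl, ← Category.assoc, cB.w φ]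
  let s' : cB.pt ⟶ A := hcB.desc ⟨A, ⟨fun j => l j, fun j j' φ => by
    simpa using hnat φ⟩⟩
  have hs' : ∀ j, cB.ι.app j ≫ s' = l j := fun j => hcB.fac _ j
  let s : B ⟶ A := eB.inv ≫ s'
  have h1 : s ≫ θ = 𝟙 B := by
    rw [show s ≫ θ = eB.inv ≫ (s' ≫ θ) by simp [s]]
    rw [Iso.inv_comp_eq, Category.comp_id]
    refine hcB.hom_ext fun j => ?_
    rw [← Category.assoc, hs', hl]
  have h2 : θ ≫ s = 𝟙 A := by
    have key : ∀ j, cA.ι.app j ≫ eA.hom ≫ θ ≫ s = cA.ι.app j ≫ eA.hom := by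
      intro j
      apply (h _ (hcptA j)).1
      show (cA.ι.app j ≫ eA.hom ≫ θ ≫ s) ≫ θ = (cA.ι.app j ≫ eA.hom) ≫ θ
      simp only [Category.assoc, h1, Category.comp_id]
    have heq : eA.hom ≫ θ ≫ s = eA.hom ≫ 𝟙 A := by
      refine hcA.hom_ext fun j => ?_
      simpa only [← Category.assoc, Category.comp_id] using key j
    simpa using (Iso.cancel_iso_hom_left eA _ _).mp heq
  exact ⟨s, h2, h1⟩

theorem statement5 {C : Type u} [Category.{v} C] [HasFiniteLimits C]
    (κ : Cardinal.{w}) (hκ : κ.IsRegular) (hacc : IsCardinalAccessible κ C)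
    (hprod : ∀ (Y : C) (J : Cat.{w, w}), IsCardinalFiltered κ J →
      Nonempty (PreservesColimitsOfShape J (prod.functor.obj Y)))
    {c d : C} (f : c ⟶ d) (J : Cat.{w, w}) (hJ : IsCardinalFiltered κ J) :
    Nonempty (PreservesColimitsOfShape J (Over.pullback f)) := by
  haveI hJfil : IsFiltered J := isFiltered_of_isCardinalFiltered hκ hJ
  haveI hcol : HasColimitsOfShape J C := hacc.1 J hJ
  haveI : PreservesColimitsOfShape J (Over.pullback f ⋙ Over.forget c) := by
    constructor
    intro F
    constructor
    intro t ht
    -- Basic abbreviations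
    let Q : Over d ⥤ C := Over.pullback f ⋙ Over.forget c
    -- behaviour of Q on morphisms
    have hQfst : ∀ {X Y : Over d} (h : X ⟶ Y),
        Q.map h ≫ pullback.fst Y.hom f = pullback.fst X.hom f ≫ h.left := by
      intro X Y h
      show ((Over.pullback f).map h).left ≫ _ = _
      simp [Over.pullback]
      exact pullback.lift_fst _ _ _
    have hQsnd : ∀ {X Y : Over d} (h : X ⟶ Y),
        Q.map h ≫ pullback.snd Y.hom f = pullback.snd X.hom f := by
      intro X Y h
      show ((Over.pullback f).map h).left ≫ _ = _
      simp [Over.pullback]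
      exact pullback.lift_snd _ _ _
    let P := colimit.isColimit (F ⋙ Q)
    let s := Q.mapCocone t
    let θ : colimit (F ⋙ Q) ⟶ s.pt := P.desc s
    have hfac : ∀ j, colimit.ι (F ⋙ Q) j ≫ θ = s.ι.app j := fun j => P.fac s j
    have hsι : ∀ j, s.ι.app j = Q.map (t.ι.app j) := fun _ => rfl
    -- colimit of the underlying objects over d
    have htd : IsColimit ((Over.forget d).mapCocone t) :=
      isColimitOfPreserves (Over.forget d) ht
    haveI : IsIso θ := by
      apply isIso_of_compact_bijective hacc θ
      intro G hG
      obtain ⟨instG⟩ := hG J hJ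
      haveI := instG
      have hcc := isColimitOfPreserves (coyoneda.obj (Opposite.op G)) htd
      haveI : HasColimit ((F ⋙ Over.forget d) ⋙ coyoneda.obj (Opposite.op G)) :=
        HasColimit.mk ⟨_, hcc⟩
      constructor
      · -- injectivity
        intro g₁ g₂ hg
        simp only [] at hg
        have hccD := isColimitOfPreserves (coyoneda.obj (Opposite.op G)) P
        obtain ⟨j₁, h₁, hh₁⟩ := Types.jointly_surjective _ hccD g₁
        obtain ⟨j₂, h₂, hh₂⟩ := Types.jointly_surjective _ hccD g₂
        replace hh₁ : h₁ ≫ colimit.ι (F ⋙ Q) j₁ = g₁ := hh₁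
        replace hh₂ : h₂ ≫ colimit.ι (F ⋙ Q) j₂ = g₂ := hh₂
        set k := IsFiltered.max j₁ j₂ with hk
        let h₁' : G ⟶ (F ⋙ Q).obj k := h₁ ≫ (F ⋙ Q).map (IsFiltered.leftToMax j₁ j₂)
        let h₂' : G ⟶ (F ⋙ Q).obj k := h₂ ≫ (F ⋙ Q).map (IsFiltered.rightToMax j₁ j₂)
        have e₁ : h₁' ≫ colimit.ι (F ⋙ Q) k = g₁ := by
          rw [← hh₁]; simp only [h₁', Category.assoc, colimit.w]
        have e₂ : h₂' ≫ colimit.ι (F ⋙ Q) k = g₂ := by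
          rw [← hh₂]; simp only [h₂', Category.assoc, colimit.w]
        have hgθ : h₁' ≫ s.ι.app k = h₂' ≫ s.ι.app k := by
          rw [← hfac k, ← Category.assoc, ← Category.assoc, e₁, e₂]; exact hg
        -- second components agree
        have hsnd : h₁' ≫ pullback.snd (F.obj k).hom f = h₂' ≫ pullback.snd (F.obj k).hom f := by
          have h0 := congrArg (fun x => x ≫ pullback.snd t.pt.hom f) hgθ
          replace h0 : h₁' ≫ (Q.map (t.ι.app k) ≫ pullback.snd t.pt.hom f)
              = h₂' ≫ (Q.map (t.ι.app k) ≫ pullback.snd t.pt.hom f) :=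
            (Category.assoc _ _ _).symm.trans (h0.trans (Category.assoc _ _ _))
          rw [show Q.map (t.ι.app k) ≫ pullback.snd t.pt.hom f
              = pullback.snd (F.obj k).hom f from hQsnd (t.ι.app k)] at h0
          exact h0
        -- first components agree after composing into the colimit
        have hfst : (h₁' ≫ pullback.fst (F.obj k).hom f) ≫ (t.ι.app k).left
            = (h₂' ≫ pullback.fst (F.obj k).hom f) ≫ (t.ι.app k).left := by
          have h0 := congrArg (fun x => x ≫ pullback.fst t.pt.hom f) hgθ
          replace h0 : h₁' ≫ (Q.map (t.ι.app k) ≫ pullback.fst t.pt.hom f)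
              = h₂' ≫ (Q.map (t.ι.app k) ≫ pullback.fst t.pt.hom f) :=
            (Category.assoc _ _ _).symm.trans (h0.trans (Category.assoc _ _ _))
          rw [show Q.map (t.ι.app k) ≫ pullback.fst t.pt.hom f
              = pullback.fst (F.obj k).hom f ≫ (t.ι.app k).left from hQfst (t.ι.app k)] at h0
          exact (Category.assoc _ _ _).trans (h0.trans (Category.assoc _ _ _).symm)
        have hfst' : ((coyoneda.obj (Opposite.op G)).mapCocone
              ((Over.forget d).mapCocone t)).ι.app k (h₁' ≫ pullback.fst (F.obj k).hom f)
            = ((coyoneda.obj (Opposite.op G)).mapCocone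
              ((Over.forget d).mapCocone t)).ι.app k (h₂' ≫ pullback.fst (F.obj k).hom f) := hfst
        obtain ⟨l, a, b, hab⟩ :=
          (Types.FilteredColimit.isColimit_eq_iff _ hcc).mp hfst'
        replace hab : (h₁' ≫ pullback.fst (F.obj k).hom f) ≫ (F.map a).left
            = (h₂' ≫ pullback.fst (F.obj k).hom f) ≫ (F.map b).left := hab
        have key : h₁' ≫ (F ⋙ Q).map a = h₂' ≫ (F ⋙ Q).map b := by
          apply pullback.hom_ext
          · simp only [Functor.comp_map, Category.assoc]
            refine (Category.assoc _ _ _).trans (Eq.trans ?_ (Category.assoc _ _ _).symm)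
            exact (congrArg (h₁' ≫ ·) (hQfst (F.map a))).trans
              (((Category.assoc _ _ _).symm.trans (hab.trans (Category.assoc _ _ _))).trans
                (congrArg (h₂' ≫ ·) (hQfst (F.map b))).symm)
          · simp only [Functor.comp_map, Category.assoc]
            refine (Category.assoc _ _ _).trans (Eq.trans ?_ (Category.assoc _ _ _).symm)
            exact (congrArg (h₁' ≫ ·) (hQsnd (F.map a))).trans
              (hsnd.trans (congrArg (h₂' ≫ ·) (hQsnd (F.map b))).symm)
        have e₁' : g₁ = (h₁' ≫ (F ⋙ Q).map a) ≫ colimit.ι (F ⋙ Q) l := by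
          rw [Category.assoc, colimit.w]; exact e₁.symm
        have e₂' : g₂ = (h₂' ≫ (F ⋙ Q).map b) ≫ colimit.ι (F ⋙ Q) l := by
          rw [Category.assoc, colimit.w]; exact e₂.symm
        rw [e₁', e₂', key]
      · -- surjectivity
        intro g
        obtain ⟨j, y, hy⟩ := Types.jointly_surjective _ hcc (g ≫ pullback.fst t.pt.hom f)
        replace hy : y ≫ (t.ι.app j).left = g ≫ pullback.fst t.pt.hom f := hy
        have w : (t.ι.app j).left ≫ t.pt.hom = (F.obj j).hom := Over.w (t.ι.app j)
        have hcond : y ≫ (F.obj j).hom = (g ≫ pullback.snd t.pt.hom f) ≫ f := by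
          exact (congrArg (y ≫ ·) w.symm).trans ((Category.assoc _ _ _).symm.trans
            ((congrArg (· ≫ t.pt.hom) hy).trans ((Category.assoc _ _ _).trans
              ((congrArg (g ≫ ·) pullback.condition).trans (Category.assoc _ _ _).symm))))
        refine ⟨pullback.lift y (g ≫ pullback.snd t.pt.hom f) hcond ≫ colimit.ι (F ⋙ Q) j, ?_⟩
        show (_ ≫ colimit.ι (F ⋙ Q) j) ≫ θ = g
        refine (Category.assoc _ _ _).trans ?_
        rw [hfac j]
        apply pullback.hom_ext
        · exact (Category.assoc _ _ _).trans
            ((congrArg (pullback.lift y (g ≫ pullback.snd t.pt.hom f) hcond ≫ ·)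
              (hQfst (t.ι.app j))).trans ((Category.assoc _ _ _).symm.trans
                ((congrArg (· ≫ (t.ι.app j).left) (pullback.lift_fst _ _ _)).trans hy)))
        · exact (Category.assoc _ _ _).trans
            ((congrArg (pullback.lift y (g ≫ pullback.snd t.pt.hom f) hcond ≫ ·)
              (hQsnd (t.ι.app j))).trans (pullback.lift_snd _ _ _))
      -- end bijectivity
    exact ⟨IsColimit.ofPointIso P⟩
  exact ⟨preservesColimitsOfShape_of_reflects_of_preserves _ (Over.forget c)⟩
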